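/- Let F, F' be d×d real matrices with all singular values of F bounded below by σ̲ > 0 (in particular F invertible), and suppose the map F ↦ R(F)^T F (with R(F) the orthogonal polar factor) is Lipschitz in Frobenius norm with modulus √2 on the set of invertible matrices with positive determinant. Then ‖R(F) − R(F')‖_F ≤ (√2 + √3)·√(d)·σ̲^{−1}·‖F − F'‖_F, assuming F' also has polar factor R(F') with ‖R(F')‖_F ≤ √3 (i.e., d = 3). -/

import Mathlib

open Matrix

/-- Frobenius norm of a real matrix. -/
noncomputable def frob {d : ℕ} (A : Matrix (Fin d) (Fin d) ℝ) : ℝ :=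
  Real.sqrt (∑ i, ∑ j, (A i j) ^ 2)

/-- Euclidean norm of a vector. -/
noncomputable def evnorm {d : ℕ} (v : Fin d → ℝ) : ℝ :=
  Real.sqrt (∑ i, (v i) ^ 2)

attribute [local instance] Matrix.frobeniusNormedAddCommGroup Matrix.frobeniusNormedRing

lemma frob_eq_norm {d : ℕ} (A : Matrix (Fin d) (Fin d) ℝ) : frob A = ‖A‖ := by
  rw [frob, Matrix.frobenius_norm_def, Real.sqrt_eq_rpow]
  congr 1
  refine Finset.sum_congr rfl fun i _ => Finset.sum_congr rfl fun j _ => ?_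
  rw [Real.norm_eq_abs, Real.rpow_two, sq_abs]

lemma evnorm_nonneg {d : ℕ} (v : Fin d → ℝ) : 0 ≤ evnorm v := Real.sqrt_nonneg _

lemma frob_inv_le (F : Matrix (Fin 3) (Fin 3) ℝ) (σlo : ℝ) (hσ : 0 < σlo)
    (hFinv : F * F⁻¹ = 1)
    (hsing : ∀ x : Fin 3 → ℝ, σlo * evnorm x ≤ evnorm (F.mulVec x)) :
    frob F⁻¹ ≤ Real.sqrt 3 * σlo⁻¹ := by
  have hcol : ∀ j : Fin 3, ∑ i, (F⁻¹ i j) ^ 2 ≤ σlo⁻¹ ^ 2 := by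
    intro j
    have h := hsing (F⁻¹.mulVec (Pi.single j 1))
    rw [Matrix.mulVec_mulVec, hFinv, Matrix.one_mulVec] at h
    have he : evnorm (Pi.single j 1 : Fin 3 → ℝ) = 1 := by
      have hs : (∑ i, ((Pi.single j 1 : Fin 3 → ℝ) i) ^ 2) = 1 := by
        simp [Pi.single_apply, apply_ite (· ^ 2), Finset.sum_ite_eq']
      rw [evnorm, hs, Real.sqrt_one]
    have hv : evnorm (F⁻¹.mulVec (Pi.single j 1)) ≤ σlo⁻¹ := by
      rw [← mul_le_mul_iff_right₀ hσ, mul_inv_cancel₀ (ne_of_gt hσ)]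
      calc σlo * evnorm (F⁻¹.mulVec (Pi.single j 1)) ≤ evnorm (Pi.single j 1 : Fin 3 → ℝ) := h
        _ = 1 := he
    have hsq : (∑ i, (F⁻¹.mulVec (Pi.single j 1) i) ^ 2) ≤ σlo⁻¹ ^ 2 := by
      unfold evnorm at hv
      have h0 : (0:ℝ) ≤ ∑ i, (F⁻¹.mulVec (Pi.single j 1) i) ^ 2 :=
        Finset.sum_nonneg fun i _ => sq_nonneg _
      calc (∑ i, (F⁻¹.mulVec (Pi.single j 1) i) ^ 2)
          = (Real.sqrt (∑ i, (F⁻¹.mulVec (Pi.single j 1) i) ^ 2)) ^ 2 := (Real.sq_sqrt h0).symm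
        _ ≤ σlo⁻¹ ^ 2 := pow_le_pow_left₀ (Real.sqrt_nonneg _) hv 2
    have hentry : ∀ i, F⁻¹.mulVec (Pi.single j 1) i = F⁻¹ i j := by
      intro i
      simp [Matrix.mulVec, dotProduct, Pi.single_apply]
    calc ∑ i, (F⁻¹ i j) ^ 2 = ∑ i, (F⁻¹.mulVec (Pi.single j 1) i) ^ 2 := by
          refine Finset.sum_congr rfl fun i _ => by rw [hentry]
      _ ≤ σlo⁻¹ ^ 2 := hsq
  have : frob F⁻¹ ≤ Real.sqrt (3 * σlo⁻¹ ^ 2) := by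
    rw [frob]
    apply Real.sqrt_le_sqrt
    rw [Finset.sum_comm]
    calc (∑ j, ∑ i, (F⁻¹ i j) ^ 2) ≤ ∑ _j : Fin 3, σlo⁻¹ ^ 2 :=
          Finset.sum_le_sum fun j _ => hcol j
      _ = 3 * σlo⁻¹ ^ 2 := by simp [Finset.sum_const]
  calc frob F⁻¹ ≤ Real.sqrt (3 * σlo⁻¹ ^ 2) := this
    _ = Real.sqrt 3 * σlo⁻¹ := by
        rw [Real.sqrt_mul (by norm_num), Real.sqrt_sq (by positivity)]

/-- Lipschitz continuity of the polar rotation factor (d = 3): if all singular values of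
`F` are at least `σ̲ > 0`, `F = R·S` and `F' = R'·S'` are polar decompositions with
rotations `R, R'` (so `‖R'‖_F ≤ √3`), and `F ↦ R(F)ᵀF` is `√2`-Lipschitz (instantiated at
this pair), then `‖R - R'‖_F ≤ (√2 + √3)·√3·σ̲⁻¹·‖F - F'‖_F`. -/
theorem stmt7 (F F' R R' S S' : Matrix (Fin 3) (Fin 3) ℝ)
    (σlo : ℝ) (hσ : 0 < σlo)
    (hRorth : Rᵀ * R = 1) (hR'orth : R'ᵀ * R' = 1)
    (hSsym : S.IsSymm) (hSpd : S.PosDef)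
    (hS'sym : S'.IsSymm) (hS'pd : S'.PosDef)
    (hF : F = R * S) (hF' : F' = R' * S')
    (hdetF : 0 < F.det) (hdetF' : 0 < F'.det)
    (hsing : ∀ x : Fin 3 → ℝ, σlo * evnorm x ≤ evnorm (F.mulVec x))
    (hR'norm : frob R' ≤ Real.sqrt 3)
    (hlip : frob (Rᵀ * F - R'ᵀ * F') ≤ Real.sqrt 2 * frob (F - F')) :
    frob (R - R') ≤ (Real.sqrt 2 + Real.sqrt 3) * Real.sqrt 3 * σlo⁻¹ * frob (F - F') := by
  have hdet : IsUnit F.det := isUnit_iff_ne_zero.mpr (ne_of_gt hdetF)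
  have hFinv : F * F⁻¹ = 1 := Matrix.mul_nonsing_inv F hdet
  have hInv : frob F⁻¹ ≤ Real.sqrt 3 * σlo⁻¹ := frob_inv_le F σlo hσ hFinv hsing
  set D := frob (F - F') with hD
  have hD0 : 0 ≤ D := Real.sqrt_nonneg _
  -- split RᵀF - R'ᵀF
  have hsplit : Rᵀ * F - R'ᵀ * F = (Rᵀ * F - R'ᵀ * F') + R'ᵀ * (F' - F) := by
    rw [mul_sub]; abel
  have hfrobsub : frob (Rᵀ * F - R'ᵀ * F) ≤ (Real.sqrt 2 + Real.sqrt 3) * D := by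
    rw [hsplit, frob_eq_norm]
    calc ‖(Rᵀ * F - R'ᵀ * F') + R'ᵀ * (F' - F)‖
        ≤ ‖Rᵀ * F - R'ᵀ * F'‖ + ‖R'ᵀ * (F' - F)‖ := norm_add_le _ _
      _ ≤ Real.sqrt 2 * D + ‖R'ᵀ‖ * ‖F' - F‖ := by
          refine add_le_add ?_ (norm_mul_le _ _)
          rw [← frob_eq_norm]; exact hlip
      _ ≤ Real.sqrt 2 * D + Real.sqrt 3 * D := by
          refine add_le_add le_rfl (mul_le_mul ?_ ?_ (norm_nonneg _) (Real.sqrt_nonneg 3))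
          · rw [Matrix.frobenius_norm_transpose, ← frob_eq_norm]; exact hR'norm
          · rw [norm_sub_rev, ← frob_eq_norm]
      _ = (Real.sqrt 2 + Real.sqrt 3) * D := by ring
  have hid : Rᵀ - R'ᵀ = (Rᵀ * F - R'ᵀ * F) * F⁻¹ := by
    rw [sub_mul, mul_assoc, mul_assoc, hFinv, mul_one, mul_one]
  have htr : frob (R - R') = frob (Rᵀ - R'ᵀ) := by
    rw [frob_eq_norm, frob_eq_norm, ← Matrix.transpose_sub, Matrix.frobenius_norm_transpose]
  calc frob (R - R') = frob ((Rᵀ * F - R'ᵀ * F) * F⁻¹) := by rw [htr, hid]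
    _ ≤ frob (Rᵀ * F - R'ᵀ * F) * frob F⁻¹ := by
        rw [frob_eq_norm, frob_eq_norm, frob_eq_norm]; exact norm_mul_le _ _
    _ ≤ ((Real.sqrt 2 + Real.sqrt 3) * D) * (Real.sqrt 3 * σlo⁻¹) := by
        refine mul_le_mul hfrobsub hInv ?_ ?_
        · rw [frob_eq_norm]; exact norm_nonneg _
        · positivity
    _ = (Real.sqrt 2 + Real.sqrt 3) * Real.sqrt 3 * σlo⁻¹ * D := by ring
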